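/- Let A ∈ ℝ^{n×n} and define its comparison matrix M(A) by M(A)_{ii} = -max(-a_{ii}, 0) and M(A)_{ij} = |a_{ij}| for i ≠ j. If M(A) is Hurwitz, then A is Hurwitz. -/

import Mathlib

open Matrix

/-- `A` is Hurwitz: every complex eigenvalue has negative real part. -/
def IsHurwitz {n : Type*} [Fintype n] [DecidableEq n] (A : Matrix n n ℝ) : Prop :=
  ∀ μ ∈ spectrum ℂ (A.map (algebraMap ℝ ℂ)), μ.re < 0

/-- The comparison matrix of `A`. -/
def compMat {n : ℕ} (A : Matrix (Fin n) (Fin n) ℝ) : Matrix (Fin n) (Fin n) ℝ :=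
  Matrix.of fun i j => if i = j then -max (-(A i i)) 0 else |A i j|

section Aux

open Filter Topology ENNReal NNReal Pointwise

attribute [local instance] Matrix.linftyOpNormedAddCommGroup Matrix.linftyOpNormedRing
  Matrix.linftyOpNormedAlgebra

variable {n : ℕ}

noncomputable local instance : CompleteSpace (Matrix (Fin n) (Fin n) ℂ) :=
  (by infer_instance : CompleteSpace ((Fin n) → (Fin n) → ℂ))

/-- Norm is preserved by complexification. -/
lemma nnnorm_map_complex (Q : Matrix (Fin n) (Fin n) ℝ) :
    ‖Q.map (algebraMap ℝ ℂ)‖₊ = ‖Q‖₊ := by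
  simp [Matrix.linfty_opNNNorm_def, Matrix.map_apply, Complex.nnnorm_real]

/-- Key lemma: a Metzler Hurwitz matrix admits no nonzero nonnegative vector `w`
with `N *ᵥ w ≥ 0`. -/
lemma metzler_hurwitz_no_nonneg (N : Matrix (Fin n) (Fin n) ℝ)
    (hmetz : ∀ i j, i ≠ j → 0 ≤ N i j) (hH : IsHurwitz N)
    (w : Fin n → ℝ) (hw : ∀ i, 0 ≤ w i) (hNw : ∀ i, 0 ≤ (N *ᵥ w) i) : w = 0 := by
  classical
  by_contra hne
  obtain ⟨i₀, hi₀⟩ : ∃ i₀, 0 < w i₀ := by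
    by_contra hall; push_neg at hall
    exact hne (funext fun i => le_antisymm (hall i) (hw i))
  set Nc := N.map (algebraMap ℝ ℂ) with hNc_def
  have hfin : (spectrum ℂ Nc).Finite := Matrix.finite_spectrum Nc
  set F : Finset ℂ := hfin.toFinset with hF_def
  set c : ℝ≥0 := 1 + (Finset.univ.sup fun i => ‖N i i‖₊)
      + F.sup (fun z => Real.toNNReal (‖z‖ ^ 2 / (-2 * z.re))) with hc_def
  have hc1 : (1 : ℝ≥0) ≤ c := by
    rw [hc_def]
    exact le_add_of_le_of_nonneg (le_add_of_le_of_nonneg le_rfl (by positivity)) (by positivity)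
  have hc0 : (0 : ℝ) < (c : ℝ) := by
    have : (0:ℝ≥0) < c := lt_of_lt_of_le one_pos hc1
    exact_mod_cast this
  have hcd : ∀ i, -(N i i) ≤ (c : ℝ) := by
    intro i
    have h1 : ‖N i i‖₊ ≤ c := by
      rw [hc_def]
      exact le_add_of_le_of_nonneg
        (le_add_of_nonneg_of_le (by positivity) (Finset.le_sup (f := fun i => ‖N i i‖₊) (Finset.mem_univ i))) (by positivity)
    calc -(N i i) ≤ |N i i| := neg_le_abs _
      _ = ((‖N i i‖₊ : ℝ≥0) : ℝ) := by rw [coe_nnnorm, Real.norm_eq_abs]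
      _ ≤ (c : ℝ) := by exact_mod_cast h1
  have hcspec : ∀ z ∈ spectrum ℂ Nc, ‖z + ((c : ℝ) : ℂ)‖₊ < c := by
    intro z hz
    have hzre : z.re < 0 := hH z hz
    have ht : ‖z‖ ^ 2 / (-2 * z.re) < (c : ℝ) := by
      have h2 : Real.toNNReal (‖z‖ ^ 2 / (-2 * z.re)) ≤
          F.sup (fun z => Real.toNNReal (‖z‖ ^ 2 / (-2 * z.re))) :=
        Finset.le_sup (f := fun z => Real.toNNReal (‖z‖ ^ 2 / (-2 * z.re)))
          (hfin.mem_toFinset.mpr hz)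
      have h3 : Real.toNNReal (‖z‖ ^ 2 / (-2 * z.re)) + 1 ≤ c := by
        calc Real.toNNReal (‖z‖ ^ 2 / (-2 * z.re)) + 1
            ≤ (F.sup fun z => Real.toNNReal (‖z‖ ^ 2 / (-2 * z.re)))
              + (1 + Finset.univ.sup fun i => ‖N i i‖₊) :=
          add_le_add h2 (le_add_of_le_of_nonneg le_rfl (by positivity))
          _ = c := by rw [hc_def, add_comm]
      have h4 : ‖z‖ ^ 2 / (-2 * z.re) ≤
          ((Real.toNNReal (‖z‖ ^ 2 / (-2 * z.re)) : ℝ≥0) : ℝ) :=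
        Real.le_coe_toNNReal _
      have h5 : ((Real.toNNReal (‖z‖ ^ 2 / (-2 * z.re)) : ℝ≥0) : ℝ) + 1 ≤ (c : ℝ) := by
        exact_mod_cast h3
      linarith
    have habs2 : ‖z‖ ^ 2 < (c : ℝ) * (-2 * z.re) := by
      have hden : 0 < -2 * z.re := by linarith
      exact (div_lt_iff₀ hden).mp ht
    have hsq : ‖z + ((c : ℝ) : ℂ)‖ ^ 2 < (c : ℝ) ^ 2 := by
      have e1 : ‖z + ((c : ℝ) : ℂ)‖ ^ 2 = (z.re + (c:ℝ))^2 + z.im^2 := by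
        rw [Complex.sq_norm, Complex.normSq_apply]
        simp [Complex.add_re, Complex.add_im]
        ring
      have e2 : ‖z‖ ^ 2 = z.re^2 + z.im^2 := by
        rw [Complex.sq_norm, Complex.normSq_apply]; ring
      nlinarith
    have habs : ‖z + ((c : ℝ) : ℂ)‖ < (c : ℝ) :=
      lt_of_pow_lt_pow_left₀ 2 hc0.le hsq
    rw [← NNReal.coe_lt_coe, coe_nnnorm]
    exact habs
  -- the shifted matrix
  set P : Matrix (Fin n) (Fin n) ℝ := N + (c : ℝ) • (1 : Matrix (Fin n) (Fin n) ℝ) with hP_def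
  have hPnn : ∀ i j, 0 ≤ P i j := by
    intro i j
    by_cases hij : i = j
    · subst hij
      simp only [hP_def, Matrix.add_apply, Matrix.smul_apply, Matrix.one_apply_eq, smul_eq_mul,
        mul_one]
      linarith [hcd i]
    · simp only [hP_def, Matrix.add_apply, Matrix.smul_apply, Matrix.one_apply_ne hij,
        smul_eq_mul, mul_zero, add_zero]
      exact hmetz i j hij
  have hPw : ∀ i, (c : ℝ) * w i ≤ (P *ᵥ w) i := by
    intro i
    rw [hP_def, Matrix.add_mulVec, Matrix.smul_mulVec, Matrix.one_mulVec]
    simp only [Pi.add_apply, Pi.smul_apply, smul_eq_mul]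
    linarith [hNw i]
  have hmono : ∀ (Q : Matrix (Fin n) (Fin n) ℝ), (∀ i j, 0 ≤ Q i j) →
      ∀ u v : Fin n → ℝ, (∀ i, u i ≤ v i) → ∀ i, (Q *ᵥ u) i ≤ (Q *ᵥ v) i := by
    intro Q hQ u v huv i
    simp only [Matrix.mulVec, dotProduct]
    exact Finset.sum_le_sum fun j _ => mul_le_mul_of_nonneg_left (huv j) (hQ i j)
  have hPk : ∀ k : ℕ, (∀ i j, 0 ≤ (P ^ k) i j) ∧ ∀ i, (c : ℝ)^k * w i ≤ ((P ^ k) *ᵥ w) i := by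
    intro k
    induction k with
    | zero =>
      constructor
      · intro i j
        rw [pow_zero]
        by_cases hij : i = j
        · subst hij; simp [Matrix.one_apply_eq]
        · simp [Matrix.one_apply_ne hij]
      · intro i
        simp [Matrix.one_mulVec]
    | succ k ih =>
      constructor
      · intro i j
        rw [pow_succ, Matrix.mul_apply]
        exact Finset.sum_nonneg fun l _ => mul_nonneg (ih.1 i l) (hPnn l j)
      · intro i
        have h1 : ((P ^ (k+1)) *ᵥ w) i = ((P ^ k) *ᵥ (P *ᵥ w)) i := by
          rw [pow_succ, ← Matrix.mulVec_mulVec]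
        rw [h1]
        have h2 := hmono (P ^ k) ih.1 ((c : ℝ) • w) (P *ᵥ w)
          (fun i => by simpa using hPw i) i
        have h3 : ((P ^ k) *ᵥ ((c : ℝ) • w)) i = (c : ℝ) * ((P ^ k) *ᵥ w) i := by
          rw [Matrix.mulVec_smul]; simp
        calc (c : ℝ)^(k+1) * w i = (c : ℝ) * ((c : ℝ)^k * w i) := by ring
          _ ≤ (c : ℝ) * (((P ^ k) *ᵥ w) i) := mul_le_mul_of_nonneg_left (ih.2 i) hc0.le
          _ = ((P ^ k) *ᵥ ((c : ℝ) • w)) i := h3.symm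
          _ ≤ _ := h2
  have hwpos : (0 : ℝ) < ‖w‖ := by
    rw [norm_pos_iff]
    exact hne
  have hnorm : ∀ k : ℕ, (c : ℝ)^k * w i₀ ≤ ‖P ^ k‖ * ‖w‖ := by
    intro k
    calc (c : ℝ)^k * w i₀ ≤ ((P ^ k) *ᵥ w) i₀ := (hPk k).2 i₀
      _ ≤ ‖((P ^ k) *ᵥ w) i₀‖ := le_abs_self _
      _ ≤ ‖(P ^ k) *ᵥ w‖ := norm_le_pi_norm _ i₀
      _ ≤ ‖P ^ k‖ * ‖w‖ := Matrix.linfty_opNorm_mulVec _ _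
  set q : ℝ≥0 := Real.toNNReal (w i₀ / ‖w‖) with hq_def
  have hq0 : 0 < q := Real.toNNReal_pos.mpr (div_pos hi₀ hwpos)
  have hnn : ∀ k : ℕ, c^k * q ≤ ‖P ^ k‖₊ := by
    intro k
    rw [← NNReal.coe_le_coe]
    push_cast
    rw [hq_def, Real.coe_toNNReal _ (div_nonneg hi₀.le hwpos.le), ← mul_div_assoc,
      div_le_iff₀ hwpos]
    simpa [coe_nnnorm] using hnorm k
  set Pc : Matrix (Fin n) (Fin n) ℂ := P.map (algebraMap ℝ ℂ) with hPc_def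
  have hPck : ∀ k : ℕ, ‖Pc ^ k‖₊ = ‖P ^ k‖₊ := by
    intro k
    have : Pc ^ k = (P ^ k).map (algebraMap ℝ ℂ) := by
      rw [hPc_def]
      exact (map_pow ((algebraMap ℝ ℂ).mapMatrix) P k).symm
    rw [this, nnnorm_map_complex]
  -- Gelfand's formula
  have hG := spectrum.pow_nnnorm_pow_one_div_tendsto_nhds_spectralRadius Pc
  -- upper bound on the spectral radius
  set ρ₀ : ℝ≥0 := F.sup fun z => ‖z + ((c : ℝ) : ℂ)‖₊ with hρ_def
  have hPcEq : Pc = algebraMap ℂ (Matrix (Fin n) (Fin n) ℂ) (((c : ℝ) : ℂ)) + Nc := by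
    ext i j
    by_cases hij : i = j
    · subst hij
      simp [hPc_def, hP_def, hNc_def, Matrix.map_apply, Matrix.add_apply,
        Matrix.algebraMap_matrix_apply, Matrix.one_apply_eq, add_comm]
    · simp [hPc_def, hP_def, hNc_def, Matrix.map_apply, Matrix.add_apply,
        Matrix.algebraMap_matrix_apply, Matrix.one_apply_ne hij, hij]
  have hspec : spectrum ℂ Pc = ({(((c : ℝ) : ℂ))} : Set ℂ) + spectrum ℂ Nc := by
    rw [hPcEq, ← spectrum.singleton_add_eq]
  have hupper : spectralRadius ℂ Pc ≤ (ρ₀ : ℝ≥0∞) := by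
    refine iSup₂_le fun z hz => ?_
    rw [hspec] at hz
    obtain ⟨a, ha, b, hb, rfl⟩ := Set.mem_add.mp hz
    rw [Set.mem_singleton_iff] at ha
    subst ha
    rw [show (((c : ℝ) : ℂ)) + b = b + ((c : ℝ) : ℂ) from add_comm _ _]
    exact_mod_cast Finset.le_sup (f := fun z => ‖z + ((c : ℝ) : ℂ)‖₊) (hfin.mem_toFinset.mpr hb)
  have hρc : ρ₀ < c := by
    rw [hρ_def]
    refine Finset.sup_lt_iff (show ⊥ < c from lt_of_lt_of_le one_pos hc1) |>.mpr ?_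
    intro z hz
    exact hcspec z (hfin.mem_toFinset.mp hz)
  -- lower bound on the spectral radius
  have hlow : (c : ℝ≥0∞) ≤ spectralRadius ℂ Pc := by
    have h1k : Filter.Tendsto (fun k : ℕ => (1 : ℝ)/k) Filter.atTop (nhds 0) :=
      tendsto_one_div_atTop_nhds_zero_nat
    have h2 : Filter.Tendsto (fun k : ℕ => q ^ ((1 : ℝ)/k)) Filter.atTop (nhds 1) := by
      have hcont : ContinuousAt (fun p : ℝ≥0 × ℝ => p.1 ^ p.2) (q, 0) :=
        NNReal.continuousAt_rpow (Or.inl hq0.ne')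
      have := hcont.tendsto.comp (Filter.Tendsto.prodMk_nhds tendsto_const_nhds h1k)
      simpa [NNReal.rpow_zero, Function.comp_def] using this
    have h3 : Filter.Tendsto (fun k : ℕ => ((c * q ^ ((1 : ℝ)/k) : ℝ≥0) : ℝ≥0∞))
        Filter.atTop (nhds ((c : ℝ≥0∞))) := by
      rw [show ((c : ℝ≥0∞)) = (((c * 1 : ℝ≥0)) : ℝ≥0∞) by rw [mul_one]]
      exact ENNReal.tendsto_coe.mpr (Filter.Tendsto.mul tendsto_const_nhds h2)
    refine le_of_tendsto_of_tendsto h3 hG ?_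
    filter_upwards [Filter.eventually_ge_atTop 1] with k hk
    have hkne : (k : ℝ) ≠ 0 := by positivity
    have key : c * q ^ ((1 : ℝ)/k) ≤ ‖Pc ^ k‖₊ ^ ((1 : ℝ)/k) := by
      have e1 : c * q ^ ((1 : ℝ)/k) = (c^k * q) ^ ((1 : ℝ)/k) := by
        rw [NNReal.mul_rpow, ← NNReal.rpow_natCast c k, ← NNReal.rpow_mul,
          mul_one_div_cancel hkne, NNReal.rpow_one]
      rw [e1, hPck k]
      exact NNReal.rpow_le_rpow (hnn k) (by positivity)
    calc ((c * q ^ ((1 : ℝ)/k) : ℝ≥0) : ℝ≥0∞) ≤ ((‖Pc ^ k‖₊ ^ ((1 : ℝ)/k) : ℝ≥0) : ℝ≥0∞) := by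
          exact_mod_cast key
      _ = (‖Pc ^ k‖₊ : ℝ≥0∞) ^ ((1 : ℝ)/k) := by
          rw [← ENNReal.coe_rpow_of_nonneg _ (by positivity : (0:ℝ) ≤ 1/k)]
  have : (c : ℝ≥0∞) ≤ (ρ₀ : ℝ≥0∞) := hlow.trans hupper
  exact absurd (ENNReal.coe_le_coe.mp this) hρc.not_ge

end Aux

theorem comparison_hurwitz_implies_hurwitz {n : ℕ} (A : Matrix (Fin n) (Fin n) ℝ)
    (h : IsHurwitz (compMat A)) : IsHurwitz A := by
  -- compMat A is Metzler
  have hmetz : ∀ i j, i ≠ j → 0 ≤ compMat A i j := by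
    intro i j hij
    simp [compMat, hij, abs_nonneg]
  -- diagonal entries of A are negative
  have hdiag : ∀ i, A i i < 0 := by
    intro i
    by_contra hai
    push_neg at hai
    have hMii : compMat A i i = 0 := by
      simp [compMat, max_eq_right, neg_nonpos.mpr hai]
    have hkey := metzler_hurwitz_no_nonneg (compMat A) hmetz h (Pi.single i 1)
      (fun j => by by_cases hj : j = i <;> simp [hj, Pi.single_apply])
      (fun k => by
        have : (compMat A *ᵥ Pi.single i 1) k = compMat A k i := by
          simp [Matrix.mulVec_single]
        rw [this]
        by_cases hk : k = i
        · subst hk; rw [hMii]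
        · exact hmetz k i hk)
    have := congrFun hkey i
    simp [Pi.single_apply] at this
  have hMdiag : ∀ i, compMat A i i = A i i := by
    intro i
    have : max (-(A i i)) 0 = -(A i i) :=
      max_eq_left (by linarith [hdiag i])
    simp [compMat, this]
  intro μ hμ
  by_contra hre
  push_neg at hre
  -- extract an eigenvector
  rw [spectrum.mem_iff] at hμ
  have hdet : (algebraMap ℂ (Matrix (Fin n) (Fin n) ℂ) μ - A.map (algebraMap ℝ ℂ)).det = 0 := by
    by_contra hd
    exact hμ ((Matrix.isUnit_iff_isUnit_det _).mpr (isUnit_iff_ne_zero.mpr hd))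
  obtain ⟨x, hx0, hx⟩ := (Matrix.exists_mulVec_eq_zero_iff).mpr hdet
  have heig : ∀ i, μ * x i = ∑ j, (A i j : ℂ) * x j := by
    intro i
    have := congrFun hx i
    simp only [Matrix.sub_mulVec, Pi.sub_apply, Pi.zero_apply, sub_eq_zero] at this
    have halg : (algebraMap ℂ (Matrix (Fin n) (Fin n) ℂ) μ *ᵥ x) i = μ * x i := by
      rw [Algebra.algebraMap_eq_smul_one, Matrix.smul_mulVec, Matrix.one_mulVec]
      rfl
    rw [halg] at this
    rw [this]
    simp [Matrix.mulVec, dotProduct, Matrix.map_apply]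
  -- the absolute-value vector
  set w : Fin n → ℝ := fun i => ‖x i‖ with hw_def
  have hw : ∀ i, 0 ≤ w i := fun i => norm_nonneg _
  have hNw : ∀ i, 0 ≤ (compMat A *ᵥ w) i := by
    intro i
    have h1 : ‖(μ - (A i i : ℂ)) * x i‖ ≤ ∑ j ∈ Finset.univ.erase i, |A i j| * w j := by
      have hsum : (μ - (A i i : ℂ)) * x i = ∑ j ∈ Finset.univ.erase i, (A i j : ℂ) * x j := by
        have := heig i
        rw [sub_mul, this, ← Finset.add_sum_erase _ _ (Finset.mem_univ i)]
        ring
      rw [hsum]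
      refine (norm_sum_le _ _).trans (le_of_eq ?_)
      refine Finset.sum_congr rfl fun j _ => ?_
      rw [norm_mul, Complex.norm_real, Real.norm_eq_abs]
    have h2 : (μ.re - A i i) * w i ≤ ‖(μ - (A i i : ℂ)) * x i‖ := by
      rw [norm_mul]
      have hre' : μ.re - A i i ≤ ‖μ - (A i i : ℂ)‖ := by
        have := Complex.re_le_norm (μ - (A i i : ℂ))
        simpa using this
      exact mul_le_mul_of_nonneg_right hre' (hw i) |>.trans_eq rfl
    have h3 : (compMat A *ᵥ w) i
        = A i i * w i + ∑ j ∈ Finset.univ.erase i, |A i j| * w j := by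
      rw [Matrix.mulVec, dotProduct, ← Finset.add_sum_erase _ _ (Finset.mem_univ i)]
      congr 1
      · rw [hMdiag i]
      · refine Finset.sum_congr rfl fun j hj => ?_
        have : compMat A i j = |A i j| := by
          simp [compMat, (Finset.ne_of_mem_erase hj).symm]
        rw [this]
    nlinarith [mul_nonneg hre (hw i)]
  have := metzler_hurwitz_no_nonneg (compMat A) hmetz h w hw hNw
  apply hx0
  funext i
  have : w i = 0 := congrFun this i
  simpa [hw_def, norm_eq_zero] using this
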